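/- Let u ∈ L²_a(μ,H), U = I_W + u, and let L = dUμ/dμ be the Radon–Nikodym density of the image measure Uμ with respect to μ. Then L∘U · E_μ[ρ(-δu) | σ(U)] ≤ 1 holds μ-almost surely, where ρ(-δu) = exp(−∫₀¹ u̇_s·dW_s − ½∫₀¹|u̇_s|² ds) is the Girsanov exponential and E_μ[·|σ(U)] is the conditional expectation given the σ-field generated by U. -/

import Mathlib

open MeasureTheory ProbabilityTheory Real

noncomputable section

/-- `ℝ^d` with the Euclidean structure. -/
abbrev Vec (d : ℕ) := EuclideanSpace ℝ (Fin d)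

/-- Path space: the classical Wiener space `W = C₀([0,1],ℝ^d)` is modelled as functions
`ℝ → ℝ^d`; only the restriction to `[0,1]` is relevant. -/
abbrev Traj (d : ℕ) := ℝ → Vec d

/-- Canonical filtration `ℬ_s` of the coordinate process on path space. -/
def canFilt (d : ℕ) (s : ℝ) : MeasurableSpace (Traj d) :=
  MeasurableSpace.comap (fun w (t : Set.Iic s) => w t) inferInstance

/-- Filtration generated by a path-valued map (e.g. the filtration `(𝒰_t)` of `U`). -/
def filtOf {Ω : Type*} (d : ℕ) (X : Ω → Traj d) (s : ℝ) : MeasurableSpace Ω :=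
  MeasurableSpace.comap (fun ω (t : Set.Iic s) => X ω t) inferInstance

/-- Relative entropy `H(ν|μ) = ∫ (dν/dμ) log (dν/dμ) dμ`. -/
def relEnt {α : Type*} [MeasurableSpace α] (ν μ : Measure α) : ℝ :=
  ∫ x, (ν.rnDeriv μ x).toReal * Real.log ((ν.rnDeriv μ x).toReal) ∂μ

/-- `μ` is the Wiener measure on path space: the coordinate process starts at `0`, has
centred Gaussian increments (characterised through one-dimensional projections) and has
increments independent of the past. -/
def IsWienerMeasure (d : ℕ) (μ : Measure (Traj d)) : Prop :=
  IsProbabilityMeasure μ ∧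
  (∀ᵐ w ∂μ, w 0 = 0) ∧
  (∀ s t : ℝ, 0 ≤ s → s ≤ t → t ≤ 1 → ∀ L : Vec d →L[ℝ] ℝ, ‖L‖ = 1 →
    μ.map (fun w => L (w t - w s)) = gaussianReal 0 (Real.toNNReal (t - s))) ∧
  (∀ s t : ℝ, 0 ≤ s → s ≤ t → t ≤ 1 →
    Indep (MeasurableSpace.comap (fun w => w t - w s) inferInstance) (canFilt d s) μ)

/-- The drift `s ↦ f s` is adapted to the canonical filtration for a.e. `s ∈ [0,1]`. -/
def AdaptedAE (d : ℕ) (f : ℝ → Traj d → Vec d) : Prop :=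
  ∀ᵐ s ∂(volume.restrict (Set.Icc (0:ℝ) 1)), Measurable[canFilt d s] (f s)

/-- Kinetic energy `|u|_H² = ∫₀¹ |u̇_s|² ds`. -/
def energy {α : Type*} (d : ℕ) (f : ℝ → α → Vec d) (x : α) : ℝ :=
  ∫ s in (0:ℝ)..1, ‖f s x‖^2

/-- Finiteness of the energy `∫₀¹|u̇_s|² ds < ∞`, stated via the lower integral. -/
def FiniteEnergy {α : Type*} (d : ℕ) (f : ℝ → α → Vec d) (x : α) : Prop :=
  ∫⁻ s in Set.Ioc (0:ℝ) 1, ENNReal.ofReal (‖f s x‖^2) < ⊤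

/-- Square integrability of the drift: `E[∫₀¹|u̇_s|² ds] < ∞`. -/
def FiniteTotalEnergy {α : Type*} [MeasurableSpace α] (d : ℕ) (f : ℝ → α → Vec d)
    (μ : Measure α) : Prop :=
  ∫⁻ x, ∫⁻ s in Set.Ioc (0:ℝ) 1, ENNReal.ofReal (‖f s x‖^2) ∂volume ∂μ < ⊤

/-- Girsanov exponential `ρ(-δu) = exp(-δu - ½|u|_H²)`, where `δ` is (a version of) the
Itô integral `∫₀¹ u̇_s·dW_s` and `en` the energy `|u|_H²`. -/
def gExp {α : Type*} (δ en : α → ℝ) (x : α) : ℝ :=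
  Real.exp (-(δ x) - (1/2) * en x)

/-- The adapted perturbation of identity `U = I_W + u`, `U(w)(t) = w(t) + ∫₀^t u̇_s(w) ds`. -/
def apiMap (d : ℕ) (f : ℝ → Traj d → Vec d) : Traj d → Traj d :=
  fun w t => w t + ∫ s in (0:ℝ)..t, f s w

/-- `U = B + u` on a general probability space: `U_t(ω) = B_t(ω) + ∫₀^t u̇_s(ω) ds`. -/
def genApi {Ω : Type*} (d : ℕ) (B : Ω → Traj d) (f : ℝ → Ω → Vec d) : Ω → Traj d :=
  fun ω t => B ω t + ∫ s in (0:ℝ)..t, f s ω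

/-- `B` is an `(ℱ_t)`-Brownian motion on `(Ω,ℱ,(ℱ_t),P)` (time horizon `[0,1]`). -/
def IsBrownian {Ω : Type*} [m0 : MeasurableSpace Ω] (d : ℕ) (P : Measure Ω)
    (F : Filtration ℝ m0) (B : Ω → Traj d) : Prop :=
  Measurable B ∧ IsWienerMeasure d (P.map B) ∧
  (∀ t : ℝ, Measurable[F t] fun ω => B ω t) ∧
  (∀ s t : ℝ, 0 ≤ s → s ≤ t → t ≤ 1 →
    Indep (MeasurableSpace.comap (fun ω => B ω t - B ω s) inferInstance) (F s) P)

/-- Drift adapted (for a.e. `s ∈ [0,1]`) to a filtration `F` on a general space. -/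
def AdaptedAEF {Ω : Type*} [m0 : MeasurableSpace Ω] (d : ℕ) (F : Filtration ℝ m0)
    (f : ℝ → Ω → Vec d) : Prop :=
  ∀ᵐ s ∂(volume.restrict (Set.Icc (0:ℝ) 1)), Measurable[F s] (f s)

/-- Two σ-fields agree up to `P`-negligible sets. -/
def aeEqSigma {Ω : Type*} [MeasurableSpace Ω] (P : Measure Ω)
    (m₁ m₂ : MeasurableSpace Ω) : Prop :=
  (∀ A, MeasurableSet[m₁] A → ∃ B, MeasurableSet[m₂] B ∧ P (symmDiff A B) = 0) ∧
  (∀ A, MeasurableSet[m₂] A → ∃ B, MeasurableSet[m₁] B ∧ P (symmDiff A B) = 0)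



lemma measurable_apiMap_aux (d : ℕ) (udot : ℝ → Traj d → Vec d)
    (humeas : Measurable (Function.uncurry udot)) : Measurable (apiMap d udot) := by
  rw [measurable_pi_iff]
  intro t
  have h1 : ∀ a b : ℝ, Measurable fun w : Traj d => ∫ s in Set.Ioc a b, udot s w := by
    intro a b
    have hsm : StronglyMeasurable fun p : Traj d × ℝ => udot p.2 p.1 :=
      (humeas.comp measurable_swap).stronglyMeasurable
    exact hsm.integral_prod_right'.measurable
  have : (fun w => apiMap d udot w t)
      = fun w => w t + ((∫ s in Set.Ioc (0:ℝ) t, udot s w) - ∫ s in Set.Ioc t (0:ℝ), udot s w) :=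
    rfl
  rw [this]
  exact (measurable_pi_apply t).add ((h1 0 t).sub (h1 t 0))

/-- With `L = dUμ/dμ` and `ρ(-δu)` the Girsanov exponential (the Itô
integral `δu = ∫₀¹ u̇_s·dW_s` being given, characterised by the Girsanov inequality
`E_μ[f∘U·ρ(-δu)] ≤ E_μ[f]` for bounded nonnegative measurable `f`), one has
`L∘U · E_μ[ρ(-δu) | σ(U)] ≤ 1` μ-a.s. -/
theorem density_times_conditional_girsanov_le_one
    (d : ℕ) (μ : Measure (Traj d)) (hμ : IsWienerMeasure d μ)
    (udot : ℝ → Traj d → Vec d)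
    (humeas : Measurable (Function.uncurry udot))
    (huadapted : AdaptedAE d udot)
    (huL2 : FiniteTotalEnergy d udot μ)
    -- `δu` is (a version of) the Itô integral `∫₀¹ u̇_s · dW_s`
    (δu : Traj d → ℝ) (hδu : Measurable δu)
    -- Girsanov's theorem for the exponential `ρ(-δu) = exp(-δu - ½|u|_H²)`
    (hGirsanov : ∀ (f : Traj d → ℝ) (c : ℝ), Measurable f → (∀ w, 0 ≤ f w) →
      (∀ w, f w ≤ c) →
      ∫ w, f (apiMap d udot w) * gExp δu (energy d udot) w ∂μ ≤ ∫ w, f w ∂μ) :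
    ∀ᵐ w ∂μ,
      ((μ.map (apiMap d udot)).rnDeriv μ (apiMap d udot w)).toReal *
        (μ[gExp δu (energy d udot) |
            MeasurableSpace.comap (apiMap d udot) inferInstance]) w ≤ 1 := by
  haveI : IsProbabilityMeasure μ := hμ.1
  set U := apiMap d udot with hUdef
  set ρ := gExp δu (energy d udot) with hρdef
  have hU : Measurable U := measurable_apiMap_aux d udot humeas
  have hmU : MeasurableSpace.comap U inferInstance ≤ MeasurableSpace.pi := hU.comap_le
  haveI : SigmaFinite (μ.trim hmU) := (isFiniteMeasure_trim hmU).toSigmaFinite _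
  by_cases hint : Integrable ρ μ
  swap
  · refine Filter.Eventually.of_forall fun w => ?_
    rw [condExp_of_not_integrable hint]
    simp
  -- ρ is positive
  have hρpos : ∀ w, 0 < ρ w := fun w => Real.exp_pos _
  set Uμ : Measure (Traj d) := μ.map U with hUμdef
  haveI : IsProbabilityMeasure Uμ := Measure.isProbabilityMeasure_map hU.aemeasurable
  -- Girsanov for indicators
  have key : ∀ B : Set (Traj d), MeasurableSet B →
      ∫ w in U ⁻¹' B, ρ w ∂μ ≤ (μ B).toReal := by
    intro B hB
    have h1 := hGirsanov (B.indicator fun _ => (1:ℝ)) 1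
      (measurable_const.indicator hB)
      (fun w => Set.indicator_nonneg (fun _ _ => zero_le_one) w)
      (fun w => Set.indicator_le_self' (fun _ _ => zero_le_one) w)
    have h2 : (fun w => B.indicator (fun _ => (1:ℝ)) (apiMap d udot w)
        * gExp δu (energy d udot) w) = (U ⁻¹' B).indicator ρ := by
      funext w
      by_cases hw : U w ∈ B <;>
        simp [Set.indicator, hw, ← hUdef, ← hρdef]
    rw [h2, integral_indicator (hU hB), integral_indicator hB] at h1
    simpa [measureReal_def] using h1
  -- absolute continuity of Uμ w.r.t. μ
  have habs : Uμ ≪ μ := by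
    refine Measure.AbsolutelyContinuous.mk fun B hB hB0 => ?_
    rw [hUμdef, Measure.map_apply hU hB]
    by_contra hne
    have hpos : 0 < μ (U ⁻¹' B) := lt_of_le_of_ne zero_le (Ne.symm hne)
    have h1 : ∫ w in U ⁻¹' B, ρ w ∂μ ≤ 0 := by
      have := key B hB
      rwa [hB0, ENNReal.toReal_zero] at this
    have h2 : 0 < ∫ w in U ⁻¹' B, ρ w ∂μ := by
      refine (integral_pos_iff_support_of_nonneg (fun w => (hρpos w).le)
        hint.integrableOn).2 ?_
      have hsupp : Function.support ρ = Set.univ := by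
        ext w; simp [Function.support, (hρpos w).ne']
      rw [hsupp]
      simpa [Measure.restrict_apply_univ] using hpos
    exact absurd (h2.trans_le h1) (lt_irrefl 0)
  -- the measure ν = (ρ·μ) ∘ U⁻¹
  set ν : Measure (Traj d) :=
    (μ.withDensity fun w => ENNReal.ofReal (ρ w)).map U with hνdef
  have hν_apply : ∀ B : Set (Traj d), MeasurableSet B →
      ν B = ∫⁻ w in U ⁻¹' B, ENNReal.ofReal (ρ w) ∂μ := by
    intro B hB
    rw [hνdef, Measure.map_apply hU hB, withDensity_apply _ (hU hB)]
  have hν_real : ∀ B : Set (Traj d), MeasurableSet B →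
      ν B = ENNReal.ofReal (∫ w in U ⁻¹' B, ρ w ∂μ) := by
    intro B hB
    rw [hν_apply B hB, ← ofReal_integral_eq_lintegral_ofReal hint.integrableOn
      (Filter.Eventually.of_forall fun w => (hρpos w).le)]
  haveI hνfin : IsFiniteMeasure ν := by
    constructor
    have : ν Set.univ = ENNReal.ofReal (∫ w in U ⁻¹' Set.univ, ρ w ∂μ) :=
      hν_real Set.univ MeasurableSet.univ
    rw [this]
    exact ENNReal.ofReal_lt_top
  have hνUμ : ν ≪ Uμ := by
    refine Measure.AbsolutelyContinuous.mk fun B hB hB0 => ?_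
    rw [hUμdef, Measure.map_apply hU hB] at hB0
    rw [hν_apply B hB, setLIntegral_measure_zero _ _ hB0]
  -- the factor h with E[ρ|σ(U)] = h ∘ U
  set h : Traj d → ℝ := fun x => (ν.rnDeriv Uμ x).toReal with hhdef
  have hh_meas : Measurable h := (Measure.measurable_rnDeriv ν Uμ).ennreal_toReal
  have hh_nn : ∀ x, 0 ≤ h x := fun x => ENNReal.toReal_nonneg
  have hh_int : Integrable (fun w => h (U w)) μ := by
    have : Integrable h Uμ := Measure.integrable_toReal_rnDeriv
    exact (integrable_map_measure hh_meas.aestronglyMeasurable hU.aemeasurable).mp this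
  have hfact : (fun w => h (U w)) =ᵐ[μ] μ[ρ | MeasurableSpace.comap U inferInstance] := by
    refine ae_eq_condExp_of_forall_setIntegral_eq hmU hint
      (fun s _ _ => hh_int.integrableOn) (fun s hs hμs => ?_) ?_
    · obtain ⟨B, hB, rfl⟩ := hs
      calc ∫ w in U ⁻¹' B, h (U w) ∂μ
          = ∫ x in B, h x ∂Uμ :=
            (setIntegral_map hB hh_meas.aestronglyMeasurable hU.aemeasurable).symm
        _ = (ν B).toReal := Measure.setIntegral_toReal_rnDeriv hνUμ B
        _ = ∫ w in U ⁻¹' B, ρ w ∂μ := by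
            rw [hν_real B hB,
              ENNReal.toReal_ofReal (integral_nonneg fun w => (hρpos w).le)]
    · have : Measurable[MeasurableSpace.comap U inferInstance] fun w => h (U w) :=
        hh_meas.comp (measurable_iff_comap_le.mpr le_rfl)
      exact this.stronglyMeasurable.aestronglyMeasurable
  -- density inequality upstairs
  set L : Traj d → ENNReal := Uμ.rnDeriv μ with hLdef
  have hL_meas : Measurable L := Measure.measurable_rnDeriv Uμ μ
  have hg_meas : Measurable fun x => ENNReal.ofReal (h x) * L x :=
    hh_meas.ennreal_ofReal.mul hL_meas
  have hkey2 : (fun x => ENNReal.ofReal (h x) * L x) ≤ᵐ[μ] fun _ => (1 : ENNReal) := by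
    refine ae_le_of_forall_setLIntegral_le_of_sigmaFinite hg_meas fun B hB hμB => ?_
    have e1 : ∫⁻ x in B, ENNReal.ofReal (h x) * L x ∂μ
        = ∫⁻ x in B, ENNReal.ofReal (h x) ∂Uμ := by
      have hwd : μ.withDensity L = Uμ := Measure.withDensity_rnDeriv_eq Uμ μ habs
      rw [← hwd, setLIntegral_withDensity_eq_setLIntegral_mul μ hL_meas
        hh_meas.ennreal_ofReal hB]
      refine lintegral_congr fun x => ?_
      simp [mul_comm]
    have e2 : ∫⁻ x in B, ENNReal.ofReal (h x) ∂Uμ = ν B := by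
      have hae : (fun x => ENNReal.ofReal (h x)) =ᵐ[Uμ] ν.rnDeriv Uμ := by
        filter_upwards [Measure.rnDeriv_lt_top ν Uμ] with x hx
        rw [hhdef]
        exact ENNReal.ofReal_toReal hx.ne
      rw [lintegral_congr_ae (ae_restrict_of_ae hae),
        Measure.setLIntegral_rnDeriv hνUμ B]
    have e3 : ν B ≤ μ B := by
      rw [hν_real B hB]
      calc ENNReal.ofReal (∫ w in U ⁻¹' B, ρ w ∂μ)
          ≤ ENNReal.ofReal (μ B).toReal := ENNReal.ofReal_le_ofReal (key B hB)
        _ = μ B := ENNReal.ofReal_toReal (measure_ne_top μ B)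
    rw [e1, e2, setLIntegral_one]
    exact e3
  -- pull back through U
  have hbad : ∀ S : Set (Traj d), MeasurableSet S → μ S = 0 →
      ∀ᵐ w ∂μ, U w ∉ S := by
    intro S hS hS0
    have : μ (U ⁻¹' S) = 0 := by
      have : Uμ S = 0 := habs hS0
      rwa [hUμdef, Measure.map_apply hU hS] at this
    exact (ae_iff).2 (by simp only [not_not]; exact this)
  have hpull1 : ∀ᵐ w ∂μ, ENNReal.ofReal (h (U w)) * L (U w) ≤ 1 := by
    have hS : MeasurableSet {x | ¬ ENNReal.ofReal (h x) * L x ≤ 1} :=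
      (measurableSet_le hg_meas measurable_const).compl
    have hS0 : μ {x | ¬ ENNReal.ofReal (h x) * L x ≤ 1} = 0 := by
      have := ae_iff.mp hkey2
      simpa using this
    filter_upwards [hbad _ hS hS0] with w hw
    simpa using hw
  have hpull2 : ∀ᵐ w ∂μ, L (U w) ≠ ⊤ := by
    have hS : MeasurableSet {x | ¬ L x < ⊤} :=
      (measurableSet_lt hL_meas measurable_const).compl
    have hS0 : μ {x | ¬ L x < ⊤} = 0 := by
      simpa [ae_iff] using Measure.rnDeriv_lt_top Uμ μ
    filter_upwards [hbad _ hS hS0] with w hw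
    simpa [lt_top_iff_ne_top] using hw
  -- conclude
  filter_upwards [hpull1, hpull2, hfact] with w hw1 hw2 hwf
  have hrw : (μ[gExp δu (energy d udot) | MeasurableSpace.comap (apiMap d udot)
      inferInstance]) w = h (U w) := hwf.symm
  rw [hrw]
  have : ((Uμ.rnDeriv μ) (U w)).toReal * h (U w)
      = (ENNReal.ofReal (h (U w)) * L (U w)).toReal := by
    rw [ENNReal.toReal_mul, ENNReal.toReal_ofReal (hh_nn _)]
    ring
  calc ((μ.map (apiMap d udot)).rnDeriv μ (apiMap d udot w)).toReal * h (U w)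
      = (ENNReal.ofReal (h (U w)) * L (U w)).toReal := this
    _ ≤ (1 : ENNReal).toReal := ENNReal.toReal_mono ENNReal.one_ne_top hw1
    _ = 1 := ENNReal.toReal_one

end
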